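/- Let f : ℝ^d → ℝ be convex and G-Lipschitz continuous, let μ > 0, and set f_μ(w) := f(w) + (μ/2)‖w‖₂². Starting from w⁽⁰⁾ = 0, consider random iterates w⁽ᵗ⁺¹⁾ = w⁽ᵗ⁾ − η_t (v⁽ᵗ⁾ + μ w⁽ᵗ⁾) for t = 0, ..., T−1, where η_t = 1/(μ(t+1)) and v⁽ᵗ⁾ is a random vector whose conditional distribution given w⁽ᵗ⁾ satisfies E[v⁽ᵗ⁾ | w⁽ᵗ⁾] ∈ ∂f(w⁽ᵗ⁾) and ‖v⁽ᵗ⁾‖₂ ≤ G almost surely. Then the averaged iterate w̄⁽ᵀ⁾ := (1/T) Σ_{t=0}^{T−1} w⁽ᵗ⁾ satisfies E[f_μ(w̄⁽ᵀ⁾)] − f_μ(w*) ≤ 2G²(1 + log T)/(μT), where w* = argmin_{w ∈ ℝ^d} f_μ(w). -/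

import Mathlib

open MeasureTheory ProbabilityTheory
open scoped RealInnerProductSpace NNReal

/-- The convex-analytic subdifferential of `f : ℝ^d → ℝ` at `w`. -/
def subdiff {d : ℕ} (f : EuclideanSpace ℝ (Fin d) → ℝ) (w : EuclideanSpace ℝ (Fin d)) :
    Set (EuclideanSpace ℝ (Fin d)) :=
  {g | ∀ v, f w + ⟪g, v - w⟫ ≤ f v}

lemma integrable_of_bdd {Ω : Type*} {mm : MeasurableSpace Ω} {μ : Measure Ω} [IsFiniteMeasure μ]
    {E : Type*} [NormedAddCommGroup E] {g : Ω → E} (hg : AEStronglyMeasurable g μ) (C : ℝ)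
    (h : ∀ᵐ ω ∂μ, ‖g ω‖ ≤ C) : Integrable g μ :=
  Integrable.mono' (integrable_const C) hg h

lemma convexOn_normSq {E : Type*} [NormedAddCommGroup E] [InnerProductSpace ℝ E] :
    ConvexOn ℝ Set.univ (fun w : E => ‖w‖ ^ 2) := by
  refine ⟨convex_univ, fun x _ y _ a b ha hb hab => ?_⟩
  simp only [smul_eq_mul]
  have h1 : ‖a • x + b • y‖ ^ 2 = ‖a • x‖ ^ 2 + 2 * ⟪a • x, b • y⟫ + ‖b • y‖ ^ 2 :=
    norm_add_sq_real _ _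
  have h2 : ⟪a • x, b • y⟫ = a * b * ⟪x, y⟫ := by
    rw [real_inner_smul_left, real_inner_smul_right]; ring
  have h3 : ‖x - y‖ ^ 2 = ‖x‖ ^ 2 - 2 * ⟪x, y⟫ + ‖y‖ ^ 2 := norm_sub_sq_real _ _
  have h4 : ‖a • x‖ = a * ‖x‖ := by rw [norm_smul, Real.norm_of_nonneg ha]
  have h5 : ‖b • y‖ = b * ‖y‖ := by rw [norm_smul, Real.norm_of_nonneg hb]
  have h6 : (0:ℝ) ≤ ‖x - y‖ ^ 2 := sq_nonneg _
  rw [h1, h2, h4, h5, mul_pow, mul_pow]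
  have hb' : b = 1 - a := by linarith
  have h7 : 0 ≤ a * b * (‖x‖ ^ 2 - 2 * ⟪x, y⟫ + ‖y‖ ^ 2) := by
    rw [← h3]; exact mul_nonneg (mul_nonneg ha hb) h6
  subst hb'
  nlinarith [h7]

lemma condexp_clm {Ω : Type*} {m m0 : MeasurableSpace Ω} {μ : Measure Ω}
    (hm : m ≤ m0) [SigmaFinite (μ.trim hm)]
    {E F : Type*} [NormedAddCommGroup E] [NormedSpace ℝ E] [CompleteSpace E]
    [NormedAddCommGroup F] [NormedSpace ℝ F] [CompleteSpace F]
    (T : E →L[ℝ] F) {v : Ω → E} (hv : Integrable v μ) :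
    (fun ω => T ((μ[v|m]) ω)) =ᵐ[μ] μ[fun ω => T (v ω)|m] := by
  refine ae_eq_condExp_of_forall_setIntegral_eq hm (T.integrable_comp hv)
    (fun s _ _ => (T.integrable_comp integrable_condExp).integrableOn)
    (fun s hs hμs => ?_) ?_
  · rw [T.integral_comp_comm integrable_condExp.integrableOn,
      setIntegral_condExp hm hv hs, T.integral_comp_comm hv.integrableOn]
  · exact StronglyMeasurable.aestronglyMeasurable
      (T.continuous.comp_stronglyMeasurable stronglyMeasurable_condExp)

lemma coord_abs_le_norm {d : ℕ} (x : EuclideanSpace ℝ (Fin d)) (i : Fin d) : |x i| ≤ ‖x‖ := by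
  rw [EuclideanSpace.norm_eq]
  calc |x i| = Real.sqrt (‖x i‖^2) := by rw [Real.sqrt_sq_eq_abs]; simp
  _ ≤ _ := by
      apply Real.sqrt_le_sqrt
      exact Finset.single_le_sum (f := fun j => ‖x j‖^2) (fun j _ => sq_nonneg _)
        (Finset.mem_univ i)

lemma condexp_inner_ae {Ω : Type*} [MeasureSpace Ω] [IsProbabilityMeasure (ℙ : Measure Ω)]
    {d : ℕ} {v h : Ω → EuclideanSpace ℝ (Fin d)} (hv : Measurable v)
    {Cv Ch : ℝ} (hvb : ∀ᵐ ω ∂ℙ, ‖v ω‖ ≤ Cv) (hhb : ∀ᵐ ω ∂ℙ, ‖h ω‖ ≤ Ch)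
    {m : MeasurableSpace Ω} (hm : m ≤ MeasureSpace.toMeasurableSpace)
    (hh : Measurable[m] h) :
    MeasureTheory.condExp m ℙ (fun ω => ⟪v ω, h ω⟫) =ᵐ[ℙ]
      fun ω => ⟪(MeasureTheory.condExp m ℙ v) ω, h ω⟫ := by
  have hvi : Integrable v ℙ := integrable_of_bdd (μ := volume) hv.aestronglyMeasurable Cv hvb
  have hvin : ∀ i : Fin d, Integrable (fun ω => v ω i) ℙ := fun i =>
    (EuclideanSpace.proj (𝕜 := ℝ) i).integrable_comp hvi
  have hhm : ∀ i : Fin d, StronglyMeasurable[m] (fun ω => h ω i) := fun i =>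
    ((EuclideanSpace.proj (𝕜 := ℝ) i).continuous.measurable.comp hh).stronglyMeasurable
  have hhb' : ∀ i : Fin d, ∀ᵐ ω ∂ℙ, ‖h ω i‖ ≤ Ch := by
    intro i; filter_upwards [hhb] with ω hω
    exact le_trans (by rw [Real.norm_eq_abs]; exact coord_abs_le_norm (h ω) i) hω
  have hprod : ∀ i : Fin d, Integrable ((fun ω => h ω i) * (fun ω => v ω i)) ℙ := fun i =>
    Integrable.bdd_mul (μ := volume) (hvin i) (((hhm i).mono hm).aestronglyMeasurable) (hhb' i)
  have e1 : (fun ω => ⟪v ω, h ω⟫) = ∑ i : Fin d, (fun ω => h ω i) * (fun ω => v ω i) := by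
    funext ω
    simp only [PiLp.inner_apply, RCLike.inner_apply, conj_trivial, Finset.sum_apply,
      Pi.mul_apply]
  have e3 := condExp_finsetSum (μ := volume) (m := m)
    (f := fun (i : Fin d) => (fun ω => h ω i) * (fun ω => v ω i)) (s := Finset.univ)
    (fun i _ => hprod i)
  have e4 : ∀ i : Fin d,
      MeasureTheory.condExp m ℙ ((fun ω => h ω i) * (fun ω => v ω i)) =ᵐ[ℙ]
        fun ω => h ω i * ((MeasureTheory.condExp m ℙ v) ω i) := by
    intro i
    have p1 := condExp_mul_of_stronglyMeasurable_left (μ := volume) (hhm i) (hprod i) (hvin i)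
    have p2 := condexp_clm hm (EuclideanSpace.proj (𝕜 := ℝ) i) hvi
    rw [show (fun ω => (EuclideanSpace.proj (𝕜 := ℝ) i) (v ω)) = (fun ω => v ω i) from rfl] at p2
    filter_upwards [p1, p2] with ω h1 h2
    rw [h1, Pi.mul_apply, ← h2]
    rfl
  rw [e1]
  have e5 : ∀ᵐ ω ∂ℙ, ∀ i : Fin d,
      (MeasureTheory.condExp m ℙ ((fun ω => h ω i) * (fun ω => v ω i))) ω =
        h ω i * ((MeasureTheory.condExp m ℙ v) ω i) := ae_all_iff.2 e4
  filter_upwards [e3, e5] with ω h3 h4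
  rw [h3]
  simp only [PiLp.inner_apply, RCLike.inner_apply, conj_trivial, Finset.sum_apply]
  exact Finset.sum_congr rfl fun i _ => h4 i

set_option maxHeartbeats 1000000 in
theorem stmt7 {d : ℕ}
    {Ωs : Type*} [MeasureSpace Ωs] [IsProbabilityMeasure (ℙ : Measure Ωs)]
    (f : EuclideanSpace ℝ (Fin d) → ℝ) (G : ℝ≥0) (μ : ℝ) (hμ : 0 < μ)
    (hconv : ConvexOn ℝ Set.univ f) (hlip : LipschitzWith G f)
    (T : ℕ) (hT : 1 ≤ T)
    (w v : ℕ → Ωs → EuclideanSpace ℝ (Fin d))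
    (hw0 : ∀ ω, w 0 ω = 0)
    (η : ℕ → ℝ) (hη : ∀ t, η t = 1 / (μ * (t + 1)))
    (hrec : ∀ t ω, w (t + 1) ω = w t ω - η t • (v t ω + μ • w t ω))
    (hwmeas : ∀ t, Measurable (w t)) (hvmeas : ∀ t, Measurable (v t))
    (hvbound : ∀ t, ∀ᵐ ω ∂ℙ, ‖v t ω‖ ≤ (G : ℝ))
    (hvcond : ∀ t, ∀ᵐ ω ∂ℙ,
      (MeasureTheory.condExp (MeasurableSpace.comap (w t) inferInstance) ℙ (v t)) ω ∈
        subdiff f (w t ω))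
    (wstar : EuclideanSpace ℝ (Fin d))
    (hstar : ∀ u, f wstar + μ / 2 * ‖wstar‖ ^ 2 ≤ f u + μ / 2 * ‖u‖ ^ 2) :
    (∫ ω, (f ((T : ℝ)⁻¹ • ∑ t ∈ Finset.range T, w t ω) +
            μ / 2 * ‖(T : ℝ)⁻¹ • ∑ t ∈ Finset.range T, w t ω‖ ^ 2) ∂ℙ) -
        (f wstar + μ / 2 * ‖wstar‖ ^ 2) ≤
      2 * (G : ℝ) ^ 2 * (1 + Real.log T) / (μ * T) := by
  classical
  have hG0 : (0:ℝ) ≤ (G:ℝ) := G.coe_nonneg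
  have hTpos : (0:ℝ) < (T:ℝ) := by exact_mod_cast Nat.lt_of_lt_of_le Nat.zero_lt_one hT
  have hTne : (T:ℝ) ≠ 0 := ne_of_gt hTpos
  set K : ℝ := (G:ℝ)/μ with hK
  have hμne : μ ≠ 0 := ne_of_gt hμ
  have hμ2 : (0:ℝ) ≤ μ/2 := by linarith
  have hK0 : 0 ≤ K := div_nonneg hG0 hμ.le
  -- deterministic bound on iterates (on the good event)
  have hwb : ∀ ω, (∀ t, ‖v t ω‖ ≤ (G:ℝ)) → ∀ t, ‖w t ω‖ ≤ K := by
    intro ω hωv t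
    induction t with
    | zero => rw [hw0 ω]; simpa using hK0
    | succ t ih =>
      have ht1 : (0:ℝ) < (t:ℝ) + 1 := by positivity
      have hsplit : w (t+1) ω = ((t:ℝ)/((t:ℝ)+1)) • w t ω - (1/(μ*((t:ℝ)+1))) • v t ω := by
        rw [hrec t ω, hη t]
        match_scalars
        · field_simp
          ring
        · ring
      rw [hsplit]
      calc ‖((t:ℝ)/((t:ℝ)+1)) • w t ω - (1/(μ*((t:ℝ)+1))) • v t ω‖
          ≤ ‖((t:ℝ)/((t:ℝ)+1)) • w t ω‖ + ‖(1/(μ*((t:ℝ)+1))) • v t ω‖ := norm_sub_le _ _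
        _ = ((t:ℝ)/((t:ℝ)+1)) * ‖w t ω‖ + (1/(μ*((t:ℝ)+1))) * ‖v t ω‖ := by
            have hc : (0:ℝ) < 1/(μ*((t:ℝ)+1)) := div_pos one_pos (mul_pos hμ ht1)
            rw [norm_smul, norm_smul, Real.norm_of_nonneg (by positivity),
              Real.norm_of_nonneg hc.le]
        _ ≤ ((t:ℝ)/((t:ℝ)+1)) * K + (1/(μ*((t:ℝ)+1))) * (G:ℝ) := by
            have hc : (0:ℝ) < 1/(μ*((t:ℝ)+1)) := div_pos one_pos (mul_pos hμ ht1)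
            exact add_le_add (mul_le_mul_of_nonneg_left ih (by positivity))
              (mul_le_mul_of_nonneg_left (hωv t) hc.le)
        _ = K := by
            rw [hK]
            have htne : ((t:ℝ)+1) ≠ 0 := ne_of_gt ht1
            field_simp
  have hwbae : ∀ t, ∀ᵐ ω ∂ℙ, ‖w t ω‖ ≤ K := fun t => by
    filter_upwards [ae_all_iff.2 hvbound] with ω hω using hwb ω hω t
  -- bounds on f
  have hfu : ∀ u : EuclideanSpace ℝ (Fin d), |f u| ≤ |f 0| + (G:ℝ) * ‖u‖ := by
    intro u
    have h1 := hlip.dist_le_mul u 0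
    rw [Real.dist_eq, dist_zero_right] at h1
    have h2 : |f u| - |f 0| ≤ |f u - f 0| := abs_sub_abs_le_abs_sub _ _
    linarith
  set B : ℝ := |f 0| + (G:ℝ) * K + μ/2 * K^2 with hB
  have hFb : ∀ u : EuclideanSpace ℝ (Fin d), ‖u‖ ≤ K → |f u + μ/2 * ‖u‖^2| ≤ B := by
    intro u hu
    have h1 := hfu u
    have h2 : |f u + μ/2*‖u‖^2| ≤ |f u| + μ/2*‖u‖^2 := by
      have h2' := abs_add_le (f u) (μ/2*‖u‖^2)
      rwa [abs_of_nonneg (mul_nonneg hμ2 (sq_nonneg _))] at h2'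
    have h3 : ‖u‖^2 ≤ K^2 := by nlinarith [norm_nonneg u]
    have h4 : (G:ℝ) * ‖u‖ ≤ (G:ℝ) * K := by gcongr
    have h5 : μ/2*‖u‖^2 ≤ μ/2*K^2 := mul_le_mul_of_nonneg_left h3 hμ2
    rw [hB]; linarith
  -- convexity of the regularized objective
  have hconv' : ConvexOn ℝ Set.univ (fun u : EuclideanSpace ℝ (Fin d) => f u + μ/2 * ‖u‖^2) := by
    have h1 := (convexOn_normSq (E := EuclideanSpace ℝ (Fin d))).smul hμ2
    have h2 := hconv.add h1
    exact h2
  -- measurability/integrability package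
  have hfwmeas : ∀ t, Measurable fun ω => f (w t ω) := fun t =>
    hlip.continuous.measurable.comp (hwmeas t)
  have hFmeas : ∀ t, Measurable fun ω => f (w t ω) + μ/2 * ‖w t ω‖^2 := fun t =>
    (hfwmeas t).add (measurable_const.mul ((hwmeas t).norm.pow_const 2))
  have hFint : ∀ t, Integrable (fun ω => f (w t ω) + μ/2 * ‖w t ω‖^2) volume := fun t =>
    integrable_of_bdd (hFmeas t).aestronglyMeasurable B (by
      filter_upwards [hwbae t] with ω hω
      rw [Real.norm_eq_abs]; exact hFb _ hω)
  have hfwint : ∀ t, Integrable (fun ω => f (w t ω)) volume := fun t =>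
    integrable_of_bdd (hfwmeas t).aestronglyMeasurable (|f 0| + (G:ℝ)*K) (by
      filter_upwards [hwbae t] with ω hω
      rw [Real.norm_eq_abs]
      refine (hfu _).trans ?_
      have : (G:ℝ) * ‖w t ω‖ ≤ (G:ℝ) * K := by gcongr
      linarith)
  have hnw2int : ∀ t, Integrable (fun ω => ‖w t ω‖^2) volume := fun t =>
    integrable_of_bdd ((hwmeas t).norm.pow_const 2).aestronglyMeasurable (K^2) (by
      filter_upwards [hwbae t] with ω hω
      rw [Real.norm_eq_abs, abs_of_nonneg (by positivity)]
      nlinarith [norm_nonneg (w t ω)])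
  have haint : ∀ t, Integrable (fun ω => ‖w t ω - wstar‖^2) volume := fun t =>
    integrable_of_bdd (((hwmeas t).sub measurable_const).norm.pow_const 2).aestronglyMeasurable
      ((K + ‖wstar‖)^2) (by
      filter_upwards [hwbae t] with ω hω
      rw [Real.norm_eq_abs, abs_of_nonneg (by positivity)]
      have h1 : ‖w t ω - wstar‖ ≤ K + ‖wstar‖ := (norm_sub_le _ _).trans (by linarith)
      nlinarith [norm_nonneg (w t ω - wstar)])
  set a : ℕ → ℝ := fun t => ∫ ω, ‖w t ω - wstar‖^2 with ha
  set b : ℕ → ℝ := fun t => (∫ ω, (f (w t ω) + μ/2 * ‖w t ω‖^2)) - (f wstar + μ/2 * ‖wstar‖^2)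
    with hb
  -- the one-step inequality
  have step : ∀ t, b t ≤ μ*(t:ℝ)/2 * a t - μ*((t:ℝ)+1)/2 * a (t+1)
      + 2*(G:ℝ)^2/(μ*((t:ℝ)+1)) := by
    intro t
    have ht1 : (0:ℝ) < (t:ℝ)+1 := by positivity
    have hμs : (0:ℝ) < μ*((t:ℝ)+1) := mul_pos hμ ht1
    have hmle : MeasurableSpace.comap (w t) inferInstance
        ≤ (inferInstance : MeasurableSpace Ωs) := (hwmeas t).comap_le
    have hwtm : Measurable[MeasurableSpace.comap (w t) inferInstance] (w t) :=
      Measurable.of_comap_le le_rfl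
    have hhm : Measurable[MeasurableSpace.comap (w t) inferInstance]
        (fun ω => w t ω - wstar) := (measurable_id.sub measurable_const).comp hwtm
    have hhb2 : ∀ᵐ ω ∂ℙ, ‖w t ω - wstar‖ ≤ K + ‖wstar‖ := by
      filter_upwards [hwbae t] with ω hω
      exact (norm_sub_le _ _).trans (by linarith)
    have hgmeas : Measurable fun ω => v t ω + μ • w t ω :=
      (hvmeas t).add ((hwmeas t).const_smul μ)
    have hgb : ∀ᵐ ω ∂ℙ, ‖v t ω + μ • w t ω‖ ≤ 2*(G:ℝ) := by
      filter_upwards [hvbound t, hwbae t] with ω h1 h2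
      have h3 : ‖μ • w t ω‖ = μ * ‖w t ω‖ := by rw [norm_smul, Real.norm_of_nonneg hμ.le]
      have h4 : μ * ‖w t ω‖ ≤ μ * K := mul_le_mul_of_nonneg_left h2 hμ.le
      have h5 : μ * K = (G:ℝ) := by rw [hK]; field_simp
      calc ‖v t ω + μ • w t ω‖ ≤ ‖v t ω‖ + ‖μ • w t ω‖ := norm_add_le _ _
        _ ≤ 2*(G:ℝ) := by rw [h3]; linarith
    have hBint : Integrable (fun ω => ⟪v t ω + μ • w t ω, w t ω - wstar⟫) volume :=
      integrable_of_bdd (hgmeas.inner ((hwmeas t).sub measurable_const)).aestronglyMeasurable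
        (2*(G:ℝ)*(K+‖wstar‖)) (by
        filter_upwards [hgb, hhb2] with ω h1 h2
        rw [Real.norm_eq_abs]
        refine (abs_real_inner_le_norm _ _).trans ?_
        have h3 := mul_le_mul h1 h2 (norm_nonneg _) (by positivity)
        linarith)
    have hvhint : Integrable (fun ω => ⟪v t ω, w t ω - wstar⟫) volume :=
      integrable_of_bdd ((hvmeas t).inner ((hwmeas t).sub measurable_const)).aestronglyMeasurable
        ((G:ℝ)*(K+‖wstar‖)) (by
        filter_upwards [hvbound t, hhb2] with ω h1 h2
        rw [Real.norm_eq_abs]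
        refine (abs_real_inner_le_norm _ _).trans ?_
        exact mul_le_mul h1 h2 (norm_nonneg _) hG0)
    have hCint : Integrable (fun ω => ‖v t ω + μ • w t ω‖^2) volume :=
      integrable_of_bdd (hgmeas.norm.pow_const 2).aestronglyMeasurable ((2*(G:ℝ))^2) (by
        filter_upwards [hgb] with ω h1
        rw [Real.norm_eq_abs, abs_of_nonneg (sq_nonneg _)]
        nlinarith [norm_nonneg (v t ω + μ • w t ω)])
    set P : ℝ := ∫ ω, ⟪v t ω + μ • w t ω, w t ω - wstar⟫ with hP
    set Q : ℝ := ∫ ω, ‖v t ω + μ • w t ω‖^2 with hQ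
    set e : ℝ := 1/(μ*((t:ℝ)+1)) with he
    have hepos : (0:ℝ) < e := by rw [he]; positivity
    have hee : e * (μ*((t:ℝ)+1)) = 1 := by rw [he]; field_simp
    -- lower bound for the v-part via conditional expectation
    have hsub : (∫ ω, ⟪v t ω, w t ω - wstar⟫) ≥ (∫ ω, f (w t ω)) - f wstar := by
      have hinner := condexp_inner_ae (hvmeas t) (hvbound t) hhb2 hmle hhm
      have hlow : ∀ᵐ ω ∂ℙ, f (w t ω) - f wstar ≤
          (MeasureTheory.condExp (MeasurableSpace.comap (w t) inferInstance) ℙ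
            (fun ω => ⟪v t ω, w t ω - wstar⟫)) ω := by
        filter_upwards [hinner, hvcond t] with ω h1 h2
        rw [h1]
        have h3 := h2 wstar
        have h4 : ⟪(MeasureTheory.condExp (MeasurableSpace.comap (w t) inferInstance) ℙ
            (v t)) ω, wstar - w t ω⟫
            = -⟪(MeasureTheory.condExp (MeasurableSpace.comap (w t) inferInstance) ℙ
              (v t)) ω, w t ω - wstar⟫ := by
          rw [← inner_neg_right, neg_sub]
        linarith
      have h5 : (∫ ω, f (w t ω)) - f wstar = ∫ ω, (f (w t ω) - f wstar) := by
        rw [integral_sub (hfwint t) (integrable_const _), integral_const]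
        simp
      rw [h5, ← integral_condExp hmle (f := fun ω => ⟪v t ω, w t ω - wstar⟫)]
      exact integral_mono_ae ((hfwint t).sub (integrable_const _)) integrable_condExp hlow
    -- pointwise quadratic identity
    have hq : ∀ ω : Ωs, ⟪v t ω + μ • w t ω, w t ω - wstar⟫
        = ⟪v t ω, w t ω - wstar⟫
          + μ*(1/2*‖w t ω‖^2 - 1/2*‖wstar‖^2 + 1/2*‖w t ω - wstar‖^2) := by
      intro ω
      rw [inner_add_left, real_inner_smul_left]
      have h1 : ⟪w t ω, w t ω - wstar⟫ = ‖w t ω‖^2 - ⟪w t ω, wstar⟫ := by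
        rw [inner_sub_right, real_inner_self_eq_norm_sq]
      have h2 := norm_sub_sq_real (w t ω) wstar
      rw [h1]
      linear_combination (-(μ/2)) * h2
    -- split the integral of the inner product
    have hcomb0 : Integrable (fun ω => 1/2*‖w t ω‖^2 - 1/2*‖wstar‖^2) volume :=
      ((hnw2int t).const_mul (1/2)).sub (integrable_const _)
    have hcomb : Integrable (fun ω => 1/2*‖w t ω‖^2 - 1/2*‖wstar‖^2
        + 1/2*‖w t ω - wstar‖^2) volume :=
      hcomb0.add ((haint t).const_mul (1/2))
    have hIB : P = (∫ ω, ⟪v t ω, w t ω - wstar⟫)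
        + μ*(1/2*(∫ ω, ‖w t ω‖^2) - 1/2*‖wstar‖^2 + 1/2*(a t)) := by
      rw [hP]
      have h1 : (fun ω => ⟪v t ω + μ • w t ω, w t ω - wstar⟫)
          = fun ω => ⟪v t ω, w t ω - wstar⟫
            + μ*(1/2*‖w t ω‖^2 - 1/2*‖wstar‖^2 + 1/2*‖w t ω - wstar‖^2) := funext hq
      rw [h1, integral_add hvhint (hcomb.const_mul μ), integral_const_mul]
      have h2 : ∫ (ω:Ωs), (1/2*‖w t ω‖^2 - 1/2*‖wstar‖^2 + 1/2*‖w t ω - wstar‖^2)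
          = 1/2*(∫ ω, ‖w t ω‖^2) - 1/2*‖wstar‖^2 + 1/2*(a t) := by
        rw [integral_add hcomb0 ((haint t).const_mul (1/2)),
          integral_sub ((hnw2int t).const_mul (1/2)) (integrable_const _),
          integral_const_mul, integral_const_mul, integral_const, ha]
        simp [measure_univ]
        rw [integral_const_mul]
      rw [h2]
    -- pointwise expansion of the recursion
    have hexp : ∀ ω, ‖w (t+1) ω - wstar‖^2 = ‖w t ω - wstar‖^2
        - 2*(η t)*⟪v t ω + μ • w t ω, w t ω - wstar⟫
        + (η t)^2 * ‖v t ω + μ • w t ω‖^2 := by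
      intro ω
      rw [hrec t ω]
      have h0 : w t ω - η t • (v t ω + μ • w t ω) - wstar
          = (w t ω - wstar) - η t • (v t ω + μ • w t ω) := sub_right_comm _ _ _
      rw [h0, norm_sub_sq_real, real_inner_smul_right, norm_smul, Real.norm_eq_abs,
        mul_pow, sq_abs, real_inner_comm (w t ω - wstar) (v t ω + μ • w t ω)]
      ring
    -- the integrated recursion
    have hIeq : a (t+1) = a t - 2*(η t)*P + (η t)^2*Q := by
      simp only [ha, hP, hQ]
      have h1 : (fun ω => ‖w (t+1) ω - wstar‖^2)
          = fun ω => (‖w t ω - wstar‖^2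
            - (2*(η t))*⟪v t ω + μ • w t ω, w t ω - wstar⟫)
            + (η t)^2 * ‖v t ω + μ • w t ω‖^2 := by
        funext ω; rw [hexp ω]
      have hsub1 : Integrable (fun ω => ‖w t ω - wstar‖^2
          - (2*(η t))*⟪v t ω + μ • w t ω, w t ω - wstar⟫) volume :=
        (haint t).sub (hBint.const_mul _)
      rw [h1, integral_add hsub1 (hCint.const_mul _),
        integral_sub (haint t) (hBint.const_mul _), integral_const_mul, integral_const_mul]
    have hC : Q ≤ (2*(G:ℝ))^2 := by
      rw [hQ]
      have h1 := integral_mono_ae hCint (integrable_const ((2*(G:ℝ))^2)) (by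
        filter_upwards [hgb] with ω h1
        nlinarith [norm_nonneg (v t ω + μ • w t ω)])
      simpa using h1
    -- lower bound for P
    have hBlow : P ≥ b t + μ/2 * a t := by
      rw [hIB]
      simp only [hb]
      have hsplit2 : (∫ ω, (f (w t ω) + μ/2 * ‖w t ω‖^2))
          = (∫ ω, f (w t ω)) + μ/2 * (∫ ω, ‖w t ω‖^2) := by
        rw [integral_add (hfwint t) ((hnw2int t).const_mul _), integral_const_mul]
      rw [hsplit2]
      nlinarith [hsub]
    -- final arithmetic
    rw [hη t, ← he] at hIeq
    have h5 : μ*((t:ℝ)+1)/2 * a (t+1) = μ*((t:ℝ)+1)/2 * a t - P + e * Q / 2 := by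
      rw [hIeq]
      linear_combination (e*Q/2 - P) * hee
    have h6 : 0 ≤ e * ((2*(G:ℝ))^2 - Q) := mul_nonneg hepos.le (by linarith)
    have h7 : 2*(G:ℝ)^2/(μ*((t:ℝ)+1)) = e * (2*(G:ℝ)^2) := by rw [he]; ring
    rw [h7]
    nlinarith [h5, hBlow, h6]
  -- summation
  have haT : 0 ≤ a T := by
    rw [ha]; exact integral_nonneg (fun ω => sq_nonneg _)
  have hsum : ∑ t ∈ Finset.range T, b t ≤ 2*(G:ℝ)^2/μ * (1 + Real.log T) := by
    have h1 : ∑ t ∈ Finset.range T, b t ≤ ∑ t ∈ Finset.range T,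
        ((μ*(t:ℝ)/2 * a t - μ*((t:ℝ)+1)/2 * a (t+1)) + 2*(G:ℝ)^2/(μ*((t:ℝ)+1))) := by
      refine Finset.sum_le_sum fun t _ => ?_
      have := step t; linarith
    rw [Finset.sum_add_distrib] at h1
    have h2 : ∑ t ∈ Finset.range T, (μ*(t:ℝ)/2 * a t - μ*((t:ℝ)+1)/2 * a (t+1))
        = μ*((0:ℕ):ℝ)/2 * a 0 - μ*((T:ℕ):ℝ)/2 * a T := by
      have h3 := Finset.sum_range_sub' (f := fun t => μ*((t:ℕ):ℝ)/2 * a t) T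
      rw [← h3]
      refine Finset.sum_congr rfl fun t _ => ?_
      push_cast
      ring
    have h3 : ∑ t ∈ Finset.range T, 2*(G:ℝ)^2/(μ*((t:ℝ)+1))
        ≤ 2*(G:ℝ)^2/μ * (1 + Real.log T) := by
      have hh : ∑ t ∈ Finset.range T, 2*(G:ℝ)^2/(μ*((t:ℝ)+1))
          = 2*(G:ℝ)^2/μ * ∑ t ∈ Finset.range T, ((t:ℝ)+1)⁻¹ := by
        rw [Finset.mul_sum]
        refine Finset.sum_congr rfl fun t _ => ?_
        have ht1ne : ((t:ℝ)+1) ≠ 0 := by positivity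
        field_simp
      rw [hh]
      have hharm : ∑ t ∈ Finset.range T, ((t:ℝ)+1)⁻¹ = ((harmonic T : ℚ) : ℝ) := by
        rw [harmonic]
        push_cast
        rfl
      rw [hharm]
      have h4 := harmonic_le_one_add_log T
      have h5 : (0:ℝ) ≤ 2*(G:ℝ)^2/μ := div_nonneg (by positivity) hμ.le
      exact mul_le_mul_of_nonneg_left h4 h5
    have h6 : 0 ≤ μ*((T:ℕ):ℝ)/2 * a T :=
      mul_nonneg (div_nonneg (mul_nonneg hμ.le (by positivity)) (by norm_num)) haT
    have h7 : μ*((0:ℕ):ℝ)/2 * a 0 = 0 := by push_cast; ring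
    linarith
  -- Jensen and conclusion
  have hJ : ∀ ω, f ((T:ℝ)⁻¹ • ∑ t ∈ Finset.range T, w t ω)
        + μ/2 * ‖(T:ℝ)⁻¹ • ∑ t ∈ Finset.range T, w t ω‖^2
      ≤ ∑ t ∈ Finset.range T, (T:ℝ)⁻¹ * (f (w t ω) + μ/2 * ‖w t ω‖^2) := by
    intro ω
    have h1 : (T:ℝ)⁻¹ • ∑ t ∈ Finset.range T, w t ω
        = ∑ t ∈ Finset.range T, (T:ℝ)⁻¹ • w t ω := Finset.smul_sum
    rw [h1]
    have h2 := hconv'.map_sum_le (t := Finset.range T) (w := fun _ => (T:ℝ)⁻¹)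
      (p := fun t => w t ω) (fun _ _ => by positivity)
      (by rw [Finset.sum_const, Finset.card_range, nsmul_eq_mul, mul_inv_cancel₀ hTne])
      (fun _ _ => Set.mem_univ _)
    simpa [smul_eq_mul] using h2
  have havgmeas : Measurable fun ω => (T:ℝ)⁻¹ • ∑ t ∈ Finset.range T, w t ω :=
    by have := (Finset.measurable_sum (Finset.range T) fun t _ => hwmeas t).const_smul ((T:ℝ)⁻¹); exact this
  have havgb : ∀ᵐ ω ∂ℙ, ‖(T:ℝ)⁻¹ • ∑ t ∈ Finset.range T, w t ω‖ ≤ K := by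
    filter_upwards [ae_all_iff.2 hvbound] with ω hω
    have hsumb : ‖∑ t ∈ Finset.range T, w t ω‖ ≤ (T:ℝ)*K := by
      refine (norm_sum_le _ _).trans ?_
      calc ∑ t ∈ Finset.range T, ‖w t ω‖ ≤ ∑ t ∈ Finset.range T, K :=
            Finset.sum_le_sum fun t _ => hwb ω hω t
        _ = (T:ℝ)*K := by rw [Finset.sum_const, Finset.card_range, nsmul_eq_mul]
    rw [norm_smul, Real.norm_eq_abs, abs_of_nonneg (by positivity)]
    calc (T:ℝ)⁻¹ * ‖∑ t ∈ Finset.range T, w t ω‖ ≤ (T:ℝ)⁻¹ * ((T:ℝ)*K) := by gcongr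
      _ = K := by field_simp
  have havgint : Integrable (fun ω => f ((T:ℝ)⁻¹ • ∑ t ∈ Finset.range T, w t ω)
      + μ/2 * ‖(T:ℝ)⁻¹ • ∑ t ∈ Finset.range T, w t ω‖^2) volume :=
    integrable_of_bdd ((hlip.continuous.measurable.comp havgmeas).add
      (measurable_const.mul (havgmeas.norm.pow_const 2))).aestronglyMeasurable B (by
      filter_upwards [havgb] with ω hω
      rw [Real.norm_eq_abs]; exact hFb _ hω)
  have hIJ : (∫ ω, (f ((T:ℝ)⁻¹ • ∑ t ∈ Finset.range T, w t ω)
      + μ/2 * ‖(T:ℝ)⁻¹ • ∑ t ∈ Finset.range T, w t ω‖^2))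
      ≤ ∑ t ∈ Finset.range T, (T:ℝ)⁻¹ * (∫ ω, (f (w t ω) + μ/2 * ‖w t ω‖^2)) := by
    calc (∫ ω, (f ((T:ℝ)⁻¹ • ∑ t ∈ Finset.range T, w t ω)
        + μ/2 * ‖(T:ℝ)⁻¹ • ∑ t ∈ Finset.range T, w t ω‖^2))
        ≤ ∫ ω, ∑ t ∈ Finset.range T, (T:ℝ)⁻¹ * (f (w t ω) + μ/2 * ‖w t ω‖^2) := by
          refine integral_mono havgint ?_ hJ
          exact integrable_finset_sum _ fun t _ => (hFint t).const_mul _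
      _ = ∑ t ∈ Finset.range T, (T:ℝ)⁻¹ * (∫ ω, (f (w t ω) + μ/2 * ‖w t ω‖^2)) := by
          rw [integral_finset_sum _ fun t _ => (hFint t).const_mul _]
          exact Finset.sum_congr rfl fun t _ => integral_const_mul _ _
  have hsplitF : ∀ t : ℕ, (∫ ω, (f (w t ω) + μ/2 * ‖w t ω‖^2))
      = b t + (f wstar + μ/2 * ‖wstar‖^2) := fun t => by rw [hb]; ring
  have hfin : ∑ t ∈ Finset.range T, (T:ℝ)⁻¹ * (∫ ω, (f (w t ω) + μ/2 * ‖w t ω‖^2))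
      = (T:ℝ)⁻¹ * (∑ t ∈ Finset.range T, b t) + (f wstar + μ/2 * ‖wstar‖^2) := by
    rw [Finset.mul_sum]
    rw [show ∑ t ∈ Finset.range T, (T:ℝ)⁻¹ * (∫ ω, (f (w t ω) + μ/2 * ‖w t ω‖^2))
        = ∑ t ∈ Finset.range T, ((T:ℝ)⁻¹ * b t + (T:ℝ)⁻¹ * (f wstar + μ/2 * ‖wstar‖^2))
      from Finset.sum_congr rfl fun t _ => by rw [hsplitF t]; ring]
    rw [Finset.sum_add_distrib, Finset.sum_const, Finset.card_range, nsmul_eq_mul]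
    field_simp
  have hfinal : (T:ℝ)⁻¹ * (2*(G:ℝ)^2/μ * (1 + Real.log T))
      = 2 * (G:ℝ)^2 * (1 + Real.log T) / (μ * T) := by
    ring
  have hmono : (T:ℝ)⁻¹ * (∑ t ∈ Finset.range T, b t)
      ≤ (T:ℝ)⁻¹ * (2*(G:ℝ)^2/μ * (1 + Real.log T)) := by
    apply mul_le_mul_of_nonneg_left hsum (by positivity)
  have hIJ' := hIJ
  rw [hfin] at hIJ'
  linarith [hIJ', hmono, hfinal.le, hfinal.ge]
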